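/- Let n_2 ∈ ℤ², n_2 ≠ 0, and m ∈ ℤ be fixed. Let N, N_1 ≥ 1. Then the number of pairs (n, n_1) ∈ (ℤ²)² such that n lies in a ball of radius N, n_1 lies in a ball of radius N_1, n - n_1 + n_2 = 0, and |n|² - |n_1|² + |n_2|² = m, is O(min{N, N_1}). -/
import Mathlib


/-- `k` lies in the (closed) ball of radius `R` centered at `c ∈ ℝ²`. -/
def inBall (k : ℤ × ℤ) (c : ℝ × ℝ) (R : ℝ) : Prop :=
  ((k.1 : ℝ) - c.1) ^ 2 + ((k.2 : ℝ) - c.2) ^ 2 ≤ R ^ 2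

/-- The squared Euclidean norm of a lattice point. -/
def sqNorm (k : ℤ × ℤ) : ℤ := k.1 ^ 2 + k.2 ^ 2

lemma ball_finite (c : ℝ × ℝ) {R : ℝ} (hR : 0 ≤ R) :
    {k : ℤ × ℤ | inBall k c R}.Finite := by
  apply Set.Finite.subset (Set.finite_Icc (⌈c.1 - R⌉, ⌈c.2 - R⌉) (⌊c.1 + R⌋, ⌊c.2 + R⌋))
  rintro ⟨x, y⟩ h
  simp only [Set.mem_setOf_eq, inBall] at h
  have h1 : ((x:ℝ) - c.1)^2 ≤ R^2 := by nlinarith [sq_nonneg ((y:ℝ) - c.2)]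
  have h2 : ((y:ℝ) - c.2)^2 ≤ R^2 := by nlinarith [sq_nonneg ((x:ℝ) - c.1)]
  constructor
  · exact ⟨Int.ceil_le.mpr (by nlinarith), Int.ceil_le.mpr (by nlinarith)⟩
  · exact ⟨Int.le_floor.mpr (by nlinarith), Int.le_floor.mpr (by nlinarith)⟩

lemma icc_card_le (lo hi : ℤ) (A B : ℝ) (h1 : A ≤ lo) (h2 : (hi:ℝ) ≤ B) (hAB : A ≤ B) :
    ((Finset.Icc lo hi).card : ℝ) ≤ B - A + 1 := by
  rw [Int.card_Icc]
  rcases le_or_gt (hi + 1 - lo) 0 with h | h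
  · rw [Int.toNat_of_nonpos h]
    simp only [Nat.cast_zero]
    linarith
  · have heq : (((hi + 1 - lo).toNat : ℕ) : ℝ) = ((hi : ℝ) + 1 - lo) := by
      have := Int.toNat_of_nonneg h.le
      exact_mod_cast congrArg (fun z : ℤ => (z : ℝ)) this
    rw [heq]; linarith

lemma line_ball_card (a b d : ℤ) (hab : a ≠ 0 ∨ b ≠ 0) (c : ℝ × ℝ) (R : ℝ) (hR : 1 ≤ R) :
    ({k : ℤ × ℤ | inBall k c R ∧ a * k.1 + b * k.2 = d}.ncard : ℝ) ≤ 3 * R := by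
  have hR0 : (0:ℝ) ≤ R := by linarith
  rcases hab with ha | hb
  · have hcard := Set.ncard_le_ncard_of_injOn (fun k : ℤ × ℤ => k.2)
      (s := {k : ℤ × ℤ | inBall k c R ∧ a * k.1 + b * k.2 = d})
      (t := ↑(Finset.Icc ⌈c.2 - R⌉ ⌊c.2 + R⌋))
      (fun k hk => by
        obtain ⟨hball, -⟩ := hk
        unfold inBall at hball
        have h2 : ((k.2:ℝ) - c.2)^2 ≤ R^2 := by nlinarith [sq_nonneg ((k.1:ℝ) - c.1)]
        simp only [Finset.coe_Icc, Set.mem_Icc]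
        exact ⟨Int.ceil_le.mpr (by nlinarith), Int.le_floor.mpr (by nlinarith)⟩)
      (fun k hk k' hk' hkk => by
        have h1 : a * k.1 + b * k.2 = d := hk.2
        have h2 : a * k'.1 + b * k'.2 = d := hk'.2
        simp only at hkk
        have : a * k.1 = a * k'.1 := by rw [hkk] at h1; linarith
        exact Prod.ext (mul_left_cancel₀ ha this) hkk)
      (Finset.finite_toSet _)
    rw [Set.ncard_coe_finset] at hcard
    calc ({k : ℤ × ℤ | inBall k c R ∧ a * k.1 + b * k.2 = d}.ncard : ℝ)
        ≤ ((Finset.Icc ⌈c.2 - R⌉ ⌊c.2 + R⌋).card : ℝ) := by exact_mod_cast hcard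
      _ ≤ (c.2 + R) - (c.2 - R) + 1 :=
          icc_card_le _ _ _ _ (Int.le_ceil _) (Int.floor_le _) (by linarith)
      _ ≤ 3 * R := by linarith
  · have hcard := Set.ncard_le_ncard_of_injOn (fun k : ℤ × ℤ => k.1)
      (s := {k : ℤ × ℤ | inBall k c R ∧ a * k.1 + b * k.2 = d})
      (t := ↑(Finset.Icc ⌈c.1 - R⌉ ⌊c.1 + R⌋))
      (fun k hk => by
        obtain ⟨hball, -⟩ := hk
        unfold inBall at hball
        have h2 : ((k.1:ℝ) - c.1)^2 ≤ R^2 := by nlinarith [sq_nonneg ((k.2:ℝ) - c.2)]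
        simp only [Finset.coe_Icc, Set.mem_Icc]
        exact ⟨Int.ceil_le.mpr (by nlinarith), Int.le_floor.mpr (by nlinarith)⟩)
      (fun k hk k' hk' hkk => by
        have h1 : a * k.1 + b * k.2 = d := hk.2
        have h2 : a * k'.1 + b * k'.2 = d := hk'.2
        simp only at hkk
        have : b * k.2 = b * k'.2 := by rw [hkk] at h1; linarith
        exact Prod.ext hkk (mul_left_cancel₀ hb this))
      (Finset.finite_toSet _)
    rw [Set.ncard_coe_finset] at hcard
    calc ({k : ℤ × ℤ | inBall k c R ∧ a * k.1 + b * k.2 = d}.ncard : ℝ)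
        ≤ ((Finset.Icc ⌈c.1 - R⌉ ⌊c.1 + R⌋).card : ℝ) := by exact_mod_cast hcard
      _ ≤ (c.1 + R) - (c.1 - R) + 1 :=
          icc_card_le _ _ _ _ (Int.le_ceil _) (Int.floor_le _) (by linarith)
      _ ≤ 3 * R := by linarith

/-- counting pairs `(n, n₁)` with `n₂ ≠ 0` fixed. -/
theorem count_pairs_fixed_n₂ :
    ∃ C : ℝ, 0 < C ∧ ∀ (n₂ : ℤ × ℤ), n₂ ≠ 0 → ∀ (m : ℤ) (N N₁ : ℝ), 1 ≤ N → 1 ≤ N₁ →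
      ∀ c c₁ : ℝ × ℝ,
      (({p : (ℤ × ℤ) × (ℤ × ℤ) |
          inBall p.1 c N ∧ inBall p.2 c₁ N₁ ∧ p.1 - p.2 + n₂ = 0 ∧
            sqNorm p.1 - sqNorm p.2 + sqNorm n₂ = m}.ncard : ℝ))
        ≤ C * min N N₁ := by
  refine ⟨3, by norm_num, fun n₂ hn₂ m N N₁ hN hN₁ c c₁ => ?_⟩
  set S := {p : (ℤ × ℤ) × (ℤ × ℤ) |
      inBall p.1 c N ∧ inBall p.2 c₁ N₁ ∧ p.1 - p.2 + n₂ = 0 ∧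
        sqNorm p.1 - sqNorm p.2 + sqNorm n₂ = m} with hS
  have h12 : n₂.1 ≠ 0 ∨ n₂.2 ≠ 0 := by
    by_contra hcon
    push_neg at hcon
    exact hn₂ (Prod.ext hcon.1 hcon.2)
  have hab : (2 * n₂.1 ≠ 0) ∨ (2 * n₂.2 ≠ 0) := by
    rcases h12 with h | h
    · left; omega
    · right; omega
  have hcomp : ∀ p : (ℤ × ℤ) × (ℤ × ℤ), p ∈ S →
      p.2.1 = p.1.1 + n₂.1 ∧ p.2.2 = p.1.2 + n₂.2 := by
    intro p hp
    obtain ⟨-, -, h3, -⟩ := hp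
    have h3' := congrArg Prod.fst h3
    have h3'' := congrArg Prod.snd h3
    simp only [Prod.fst_add, Prod.fst_sub, Prod.snd_add, Prod.snd_sub, Prod.fst_zero,
      Prod.snd_zero] at h3' h3''
    omega
  have hinj : ∀ p ∈ S, ∀ q ∈ S, p.1 = q.1 → p = q := by
    intro p hp q hq h
    have h1 := hcomp p hp
    have h2 := hcomp q hq
    refine Prod.ext h (Prod.ext ?_ ?_) <;> rw [Prod.ext_iff] at h <;> omega
  have hinj' : ∀ p ∈ S, ∀ q ∈ S, p.2 = q.2 → p = q := by
    intro p hp q hq h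
    have h1 := hcomp p hp
    have h2 := hcomp q hq
    refine Prod.ext (Prod.ext ?_ ?_) h <;> rw [Prod.ext_iff] at h <;> omega
  have bound1 : (S.ncard : ℝ) ≤ 3 * N := by
    refine le_trans ?_ (line_ball_card (2 * n₂.1) (2 * n₂.2) (-m) hab c N hN)
    have hle := Set.ncard_le_ncard_of_injOn (fun p : (ℤ × ℤ) × (ℤ × ℤ) => p.1)
      (s := S)
      (t := {k : ℤ × ℤ | inBall k c N ∧ 2 * n₂.1 * k.1 + 2 * n₂.2 * k.2 = -m})
      (fun p hp => by
        obtain ⟨hu, hv⟩ := hcomp p hp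
        obtain ⟨hb, -, -, h4⟩ := hp
        refine ⟨hb, ?_⟩
        unfold sqNorm at h4
        rw [hu, hv] at h4
        linear_combination -h4)
      (fun p hp q hq h => hinj p hp q hq h)
      (((ball_finite c (by linarith : (0:ℝ) ≤ N)).subset (fun k hk => hk.1)))
    exact_mod_cast hle
  have bound2 : (S.ncard : ℝ) ≤ 3 * N₁ := by
    refine le_trans ?_ (line_ball_card (2 * n₂.1) (2 * n₂.2) (2 * sqNorm n₂ - m) hab c₁ N₁ hN₁)
    have hle := Set.ncard_le_ncard_of_injOn (fun p : (ℤ × ℤ) × (ℤ × ℤ) => p.2)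
      (s := S)
      (t := {k : ℤ × ℤ | inBall k c₁ N₁ ∧ 2 * n₂.1 * k.1 + 2 * n₂.2 * k.2 = 2 * sqNorm n₂ - m})
      (fun p hp => by
        obtain ⟨hu, hv⟩ := hcomp p hp
        obtain ⟨-, hb, -, h4⟩ := hp
        refine ⟨hb, ?_⟩
        unfold sqNorm at h4 ⊢
        rw [hu, hv] at h4 ⊢
        linear_combination -h4)
      (fun p hp q hq h => hinj' p hp q hq h)
      (((ball_finite c₁ (by linarith : (0:ℝ) ≤ N₁)).subset (fun k hk => hk.1)))
    exact_mod_cast hle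
  rcases le_total N N₁ with h | h
  · rw [min_eq_left h]; exact bound1
  · rw [min_eq_right h]; exact bound2
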